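/- Let f be a matrix Schur function with f(0) = α₀ and Schur transform f₁ with f₁(0) = α₁, and set ρ₀^R := (1-α₀α₀†)^{1/2}. Then det(1 - f(z)·α₀†) = det((ρ₀^R)²)·(1 - z·tr(α₁·α₀†) + O(z²)) as z → 0. -/

import Mathlib

open Matrix Asymptotics Polynomial Filter
open scoped ComplexOrder

attribute [local instance] Matrix.normedAddCommGroup Matrix.normedSpace

/-- The positive semidefinite square root of a positive semidefinite matrix
(the definition `Matrix.PosSemidef.sqrt` of the older Mathlib, since removed). -/
noncomputable def Matrix.PosSemidef.sqrt {n 𝕜 : Type*} [Fintype n] [RCLike 𝕜] [DecidableEq n]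
    {A : Matrix n n 𝕜} (hA : A.PosSemidef) : Matrix n n 𝕜 :=
  hA.1.eigenvectorUnitary.1 * diagonal ((↑) ∘ (√·) ∘ hA.1.eigenvalues) *
  (star hA.1.eigenvectorUnitary : Matrix n n 𝕜)

theorem Matrix.PosSemidef.sqrt_mul_self {n 𝕜 : Type*} [Fintype n] [RCLike 𝕜] [DecidableEq n]
    {A : Matrix n n 𝕜} (hA : A.PosSemidef) : hA.sqrt * hA.sqrt = A := by
  have hVU : (star hA.1.eigenvectorUnitary : Matrix n n 𝕜) * (hA.1.eigenvectorUnitary : Matrix n n 𝕜) = 1 :=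
    Matrix.mem_unitaryGroup_iff'.mp hA.1.eigenvectorUnitary.2
  have hD : diagonal ((↑) ∘ (√·) ∘ hA.1.eigenvalues) * diagonal ((↑) ∘ (√·) ∘ hA.1.eigenvalues)
      = diagonal (RCLike.ofReal ∘ hA.1.eigenvalues : n → 𝕜) := by
    rw [diagonal_mul_diagonal]
    congr 1
    funext i
    simp only [Function.comp_apply]
    rw [← RCLike.ofReal_mul, Real.mul_self_sqrt (hA.eigenvalues_nonneg i)]
  calc hA.sqrt * hA.sqrt = (hA.1.eigenvectorUnitary : Matrix n n 𝕜) *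
        (diagonal ((↑) ∘ (√·) ∘ hA.1.eigenvalues) * diagonal ((↑) ∘ (√·) ∘ hA.1.eigenvalues)) *
        (star hA.1.eigenvectorUnitary : Matrix n n 𝕜) := by
        rw [Matrix.PosSemidef.sqrt]
        simp only [Matrix.mul_assoc]
        rw [← Matrix.mul_assoc (star hA.1.eigenvectorUnitary : Matrix n n 𝕜)
          (hA.1.eigenvectorUnitary : Matrix n n 𝕜), hVU, Matrix.one_mul]
    _ = A := by
        rw [hD]
        conv_rhs => rw [hA.1.spectral_theorem, Unitary.conjStarAlgAut_apply]

theorem Matrix.PosSemidef.sq_sqrt {n 𝕜 : Type*} [Fintype n] [RCLike 𝕜] [DecidableEq n]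
    {A : Matrix n n 𝕜} (hA : A.PosSemidef) : hA.sqrt ^ 2 = A := by
  rw [sq, hA.sqrt_mul_self]

namespace SchurAux

variable {n : Type*} [Fintype n] [DecidableEq n]

lemma conj_pow (U D V : Matrix n n ℂ) (hVU : V * U = 1) (hUV : U * V = 1) (k : ℕ) :
    (U * D * V) ^ k = U * D ^ k * V := by
  induction k with
  | zero => simp [hUV]
  | succ k ih =>
      rw [pow_succ, ih, pow_succ]
      calc U * D ^ k * V * (U * D * V) = U * D ^ k * (V * U) * D * V := by
            simp only [Matrix.mul_assoc]
        _ = U * (D ^ k * D) * V := by rw [hVU]; simp only [Matrix.mul_one, Matrix.mul_assoc]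

lemma aeval_conj (q : ℝ[X]) (U D V : Matrix n n ℂ) (hVU : V * U = 1) (hUV : U * V = 1) :
    aeval (U * D * V) q = U * aeval D q * V := by
  induction q using Polynomial.induction_on' with
  | add p q hp hq => simp [hp, hq, Matrix.mul_add, Matrix.add_mul]
  | monomial k a =>
      simp [aeval_monomial, conj_pow U D V hVU hUV, Algebra.algebraMap_eq_smul_one,
        smul_mul_assoc, mul_smul_comm]

lemma aeval_diagonal (q : ℝ[X]) (d : n → ℂ) :
    aeval (diagonal d) q = diagonal (fun i => aeval (d i) q) := by
  have h1 := Polynomial.aeval_algHom_apply (Matrix.diagonalAlgHom (α := ℂ) (n := n) ℝ) d q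
  simp only [Matrix.diagonalAlgHom_apply] at h1
  rw [h1]
  exact congrArg diagonal (funext fun i =>
    (Polynomial.aeval_algHom_apply (Pi.evalAlgHom ℝ (fun _ : n => ℂ) i) d q).symm)

lemma aeval_real (q : ℝ[X]) (x : ℝ) :
    aeval ((x : ℂ)) q = ((q.eval x : ℝ) : ℂ) := by
  rw [show ((x:ℂ)) = algebraMap ℝ ℂ x from rfl, Polynomial.aeval_algebraMap_apply]
  simp

lemma aeval_sqrt {A : Matrix n n ℂ} (hA : A.PosSemidef) (q : ℝ[X])
    (hq : ∀ i, q.eval (hA.1.eigenvalues i) = Real.sqrt (hA.1.eigenvalues i)) :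
    aeval A q = hA.sqrt := by
  have hUV : (hA.1.eigenvectorUnitary : Matrix n n ℂ) * (star hA.1.eigenvectorUnitary : Matrix n n ℂ) = 1 :=
    Matrix.mem_unitaryGroup_iff.mp hA.1.eigenvectorUnitary.2
  have hVU : (star hA.1.eigenvectorUnitary : Matrix n n ℂ) * (hA.1.eigenvectorUnitary : Matrix n n ℂ) = 1 :=
    Matrix.mem_unitaryGroup_iff'.mp hA.1.eigenvectorUnitary.2
  conv_lhs => rw [hA.1.spectral_theorem, Unitary.conjStarAlgAut_apply]
  rw [aeval_conj _ _ _ _ hVU hUV, aeval_diagonal]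
  have key : (fun i => aeval ((RCLike.ofReal ∘ hA.1.eigenvalues) i) q)
      = (RCLike.ofReal ∘ Real.sqrt ∘ hA.1.eigenvalues : n → ℂ) := by
    funext i
    simp only [Function.comp_apply]
    exact (aeval_real q (hA.1.eigenvalues i)).trans (by rw [hq i]; rfl)
  rw [key, Matrix.PosSemidef.sqrt]

lemma mul_pow_comm {A B X : Matrix n n ℂ} (h : X * A = B * X) (k : ℕ) :
    X * A ^ k = B ^ k * X := by
  induction k with
  | zero => simp
  | succ k ih => rw [pow_succ, ← Matrix.mul_assoc, ih, Matrix.mul_assoc, h, pow_succ, Matrix.mul_assoc]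

lemma mul_aeval {A B X : Matrix n n ℂ} (h : X * A = B * X) (q : ℝ[X]) :
    X * aeval A q = aeval B q * X := by
  induction q using Polynomial.induction_on' with
  | add p q hp hq => simp [hp, hq, Matrix.mul_add, Matrix.add_mul]
  | monomial k a =>
      simp only [aeval_monomial, Algebra.algebraMap_eq_smul_one, smul_mul_assoc, one_mul,
        mul_smul_comm, Matrix.mul_smul, Matrix.smul_mul]
      rw [mul_pow_comm h]

lemma intertwine {A B X : Matrix n n ℂ} (hA : A.PosSemidef) (hB : B.PosSemidef)
    (h : X * A = B * X) : X * hA.sqrt = hB.sqrt * X := by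
  classical
  set s : Finset ℝ := (Finset.univ.image hA.1.eigenvalues) ∪ (Finset.univ.image hB.1.eigenvalues)
    with hs
  set q := Lagrange.interpolate s id Real.sqrt with hqdef
  have hqA : ∀ i, q.eval (hA.1.eigenvalues i) = Real.sqrt (hA.1.eigenvalues i) := fun i =>
    Lagrange.eval_interpolate_at_node _ (Set.injOn_id _)
      (Finset.mem_union_left _ (Finset.mem_image_of_mem _ (Finset.mem_univ i)))
  have hqB : ∀ i, q.eval (hB.1.eigenvalues i) = Real.sqrt (hB.1.eigenvalues i) := fun i =>
    Lagrange.eval_interpolate_at_node _ (Set.injOn_id _)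
      (Finset.mem_union_right _ (Finset.mem_image_of_mem _ (Finset.mem_univ i)))
  rw [← aeval_sqrt hA q hqA, ← aeval_sqrt hB q hqB, mul_aeval h]

end SchurAux

namespace SchurAux2

variable {n : Type*} [Fintype n] [DecidableEq n]

/-- `∑ i, det (A with column i replaced by i-th column of C) = tr (adjugate A * C)`. -/
lemma sum_det_updateColumn (A C : Matrix n n ℂ) :
    ∑ i, (A.updateCol i (fun r => C r i)).det = (A.adjugate * C).trace := by
  have h : ∀ i, (A.updateCol i (fun r => C r i)).det = (A.adjugate *ᵥ (fun r => C r i)) i := by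
    intro i
    rw [← Matrix.cramer_eq_adjugate_mulVec, Matrix.cramer_apply]
  simp only [h]
  simp [Matrix.trace, Matrix.diag, Matrix.mulVec, Matrix.mul_apply, dotProduct]

lemma analyticAt_det {M : ℂ → Matrix n n ℂ} {z : ℂ}
    (h : ∀ i j, AnalyticAt ℂ (fun w => M w i j) z) :
    AnalyticAt ℂ (fun w => (M w).det) z := by
  simp only [Matrix.det_apply']
  exact Finset.analyticAt_fun_sum _ fun σ _ =>
    analyticAt_const.mul (Finset.analyticAt_fun_prod _ fun i _ => h (σ i) i)

lemma hasDerivAt_det {M : ℂ → Matrix n n ℂ} {M' : Matrix n n ℂ} {z : ℂ}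
    (h : ∀ i j, HasDerivAt (fun w => M w i j) (M' i j) z) :
    HasDerivAt (fun w => (M w).det) ((M z).adjugate * M').trace z := by
  have key : HasDerivAt (fun w => (M w).det)
      (∑ σ : Equiv.Perm n, ((Equiv.Perm.sign σ : ℤ) : ℂ) *
        ∑ i, (∏ j ∈ Finset.univ.erase i, M z (σ j) j) • M' (σ i) i) z := by
    simp only [Matrix.det_apply']
    apply HasDerivAt.fun_sum
    intro σ _
    exact ((HasDerivAt.fun_finset_prod (fun i _ => h (σ i) i)).const_mul _)
  convert key using 1
  rw [← sum_det_updateColumn (M z) M']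
  have hd : ∀ i, ((M z).updateCol i fun r => M' r i).det
      = ∑ σ : Equiv.Perm n, ((Equiv.Perm.sign σ : ℤ) : ℂ) *
          ((∏ j ∈ Finset.univ.erase i, M z (σ j) j) * M' (σ i) i) := by
    intro i
    rw [Matrix.det_apply']
    refine Finset.sum_congr rfl fun σ _ => ?_
    congr 1
    rw [← Finset.mul_prod_erase Finset.univ
      (fun j => ((M z).updateCol i fun r => M' r i) (σ j) j) (Finset.mem_univ i)]
    rw [mul_comm]
    congr 1
    · refine Finset.prod_congr rfl fun j hj => ?_
      have hji : j ≠ i := (Finset.mem_erase.mp hj).1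
      simp [Matrix.updateCol_apply, hji]
    · simp [Matrix.updateCol_apply]
  simp only [hd]
  rw [Finset.sum_comm]
  simp only [smul_eq_mul, Finset.mul_sum]

end SchurAux2

/-- For a matrix Schur function `f` with Schur transform `f₁`, `α₀ = f(0)`, `α₁ = f₁(0)`:
`det(1 - f(z)α₀†) = det((ρ₀^R)²) (1 - z tr(α₁α₀†) + O(z²))` as `z → 0`. -/
theorem det_one_sub_schur_expansion (p : ℕ)
    (f f₁ : ℂ → Matrix (Fin p) (Fin p) ℂ)
    (hf : AnalyticOnNhd ℂ f (Metric.ball 0 1))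
    (hcontr : ∀ z ∈ Metric.ball (0:ℂ) 1,
      ((1 : Matrix (Fin p) (Fin p) ℂ) - (f z)ᴴ * f z).PosDef)
    (hR : ((1 : Matrix (Fin p) (Fin p) ℂ) - f 0 * (f 0)ᴴ).PosSemidef)
    (hL : ((1 : Matrix (Fin p) (Fin p) ℂ) - (f 0)ᴴ * f 0).PosSemidef)
    (hf₁ : AnalyticOnNhd ℂ f₁ (Metric.ball 0 1))
    (hdef : ∀ z ∈ Metric.ball (0:ℂ) 1, z ≠ 0 →
      f₁ z = z⁻¹ • (hR.sqrt⁻¹ * (f z - f 0) * (1 - (f 0)ᴴ * f z)⁻¹ * hL.sqrt)) :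
    (fun z : ℂ => ((1 : Matrix (Fin p) (Fin p) ℂ) - f z * (f 0)ᴴ).det
        - (hR.sqrt ^ 2).det * (1 - z * (f₁ 0 * (f 0)ᴴ).trace))
      =O[nhds 0] fun z : ℂ => z ^ 2 := by
  classical
  have h0mem : (0:ℂ) ∈ Metric.ball (0:ℂ) 1 := by simp
  have hfa : AnalyticAt ℂ f 0 := hf 0 h0mem
  have hβ : HasDerivAt f (deriv f 0) 0 := hfa.differentiableAt.hasDerivAt
  set β := deriv f 0 with hβdef
  set αd := (f 0)ᴴ with hαd
  set A := (1 : Matrix (Fin p) (Fin p) ℂ) - f 0 * (f 0)ᴴ with hAdef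
  set B := (1 : Matrix (Fin p) (Fin p) ℂ) - (f 0)ᴴ * f 0 with hBdef
  have hBpd : B.PosDef := hcontr 0 h0mem
  have hdetB : B.det ≠ 0 := hBpd.det_pos.ne'
  have hdetAB : A.det = B.det := by
    rw [hAdef, hBdef, sub_eq_add_neg, sub_eq_add_neg, ← mul_neg, ← neg_mul]
    exact Matrix.det_one_add_mul_comm _ _
  have hdetA : A.det ≠ 0 := by rw [hdetAB]; exact hdetB
  set ρR := hR.sqrt with hρRdef
  set ρL := hL.sqrt with hρLdef
  have hρR2 : ρR * ρR = A := hR.sqrt_mul_self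
  have hρL2 : ρL * ρL = B := hL.sqrt_mul_self
  have hdetρR : IsUnit ρR.det := by
    have h1 : ρR.det * ρR.det = A.det := by rw [← Matrix.det_mul, hρR2]
    exact isUnit_iff_ne_zero.mpr (fun h => hdetA (by rw [← h1, h, zero_mul]))
  have hdetρL : IsUnit ρL.det := by
    have h1 : ρL.det * ρL.det = B.det := by rw [← Matrix.det_mul, hρL2]
    exact isUnit_iff_ne_zero.mpr (fun h => hdetB (by rw [← h1, h, zero_mul]))
  have hAinv : A⁻¹ = ρR⁻¹ * ρR⁻¹ := by rw [← hρR2, Matrix.mul_inv_rev]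
  have hBinvρL : B⁻¹ * ρL = ρL⁻¹ := by
    rw [← hρL2, Matrix.mul_inv_rev, Matrix.mul_assoc, Matrix.nonsing_inv_mul _ hdetρL,
      Matrix.mul_one]
  have hint : αd * ρR = ρL * αd := by
    refine SchurAux.intertwine hR hL ?_
    show αd * ((1 : Matrix (Fin p) (Fin p) ℂ) - f 0 * (f 0)ᴴ)
        = ((1 : Matrix (Fin p) (Fin p) ℂ) - (f 0)ᴴ * f 0) * αd
    rw [hαd]
    noncomm_ring
  have hswap : ρL⁻¹ * αd = αd * ρR⁻¹ := by
    have h1 : ρL⁻¹ * (αd * ρR) * ρR⁻¹ = ρL⁻¹ * (ρL * αd) * ρR⁻¹ := by rw [hint]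
    calc ρL⁻¹ * αd = ρL⁻¹ * (αd * ρR) * ρR⁻¹ := by
          rw [Matrix.mul_assoc ρL⁻¹, Matrix.mul_assoc αd, Matrix.mul_nonsing_inv _ hdetρR,
            Matrix.mul_one]
      _ = ρL⁻¹ * (ρL * αd) * ρR⁻¹ := h1
      _ = αd * ρR⁻¹ := by
          rw [← Matrix.mul_assoc ρL⁻¹, Matrix.nonsing_inv_mul _ hdetρL, Matrix.one_mul]
  -- identification of f₁ 0
  have hfc : ContinuousAt f 0 := hfa.continuousAt
  have hWc : ContinuousAt (fun z => ((1 : Matrix (Fin p) (Fin p) ℂ) - αd * f z)⁻¹) 0 := by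
    have h1 : ContinuousAt (fun z => (1 : Matrix (Fin p) (Fin p) ℂ) - αd * f z) 0 :=
      continuousAt_const.sub
        (((continuous_const.matrix_mul continuous_id).continuousAt).comp hfc)
    have h2 : ContinuousAt Inv.inv ((1 : Matrix (Fin p) (Fin p) ℂ) - αd * f 0) := by
      apply continuousAt_matrix_inv
      rw [show (Ring.inverse : ℂ → ℂ) = Inv.inv from Ring.inverse_eq_inv']
      exact continuousAt_inv₀ hdetB
    exact ContinuousAt.comp (x := (0:ℂ)) h2 h1
  have hslope : Filter.Tendsto (fun z : ℂ => z⁻¹ • (f z - f 0)) (nhdsWithin 0 {(0:ℂ)}ᶜ)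
      (nhds β) := by
    have h1 := hasDerivAt_iff_tendsto_slope.mp hβ
    refine h1.congr (fun z => ?_)
    rw [slope_def_module, sub_zero]
  have hg : Filter.Tendsto
      (fun z => ρR⁻¹ * (z⁻¹ • (f z - f 0)) * (((1 : Matrix (Fin p) (Fin p) ℂ) - αd * f z)⁻¹ * ρL))
      (nhdsWithin 0 {(0:ℂ)}ᶜ) (nhds (ρR⁻¹ * β * (B⁻¹ * ρL))) := by
    refine Filter.Tendsto.mul (Filter.Tendsto.mul tendsto_const_nhds hslope) ?_
    exact Filter.Tendsto.mul (hWc.tendsto.mono_left nhdsWithin_le_nhds) tendsto_const_nhds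
  have hev : f₁ =ᶠ[nhdsWithin 0 {(0:ℂ)}ᶜ]
      fun z => ρR⁻¹ * (z⁻¹ • (f z - f 0)) *
        (((1 : Matrix (Fin p) (Fin p) ℂ) - αd * f z)⁻¹ * ρL) := by
    filter_upwards [mem_nhdsWithin_of_mem_nhds (Metric.ball_mem_nhds (0:ℂ) one_pos),
      self_mem_nhdsWithin] with z hz hz0
    rw [hdef z hz hz0]
    simp only [Matrix.mul_smul, Matrix.smul_mul, Matrix.mul_assoc]
    rfl
  have t1 : Filter.Tendsto f₁ (nhdsWithin 0 {(0:ℂ)}ᶜ) (nhds (ρR⁻¹ * β * (B⁻¹ * ρL))) :=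
    hg.congr' hev.symm
  have t2 : Filter.Tendsto f₁ (nhdsWithin 0 {(0:ℂ)}ᶜ) (nhds (f₁ 0)) :=
    (hf₁ 0 h0mem).continuousAt.continuousWithinAt
  have hα₁ : f₁ 0 = ρR⁻¹ * β * (B⁻¹ * ρL) := tendsto_nhds_unique t2 t1
  -- the trace identity
  have htrace : (f₁ 0 * αd).trace = (A⁻¹ * (β * αd)).trace := by
    rw [hα₁, hBinvρL]
    have h1 : ρR⁻¹ * β * ρL⁻¹ * αd = ρR⁻¹ * (β * αd) * ρR⁻¹ := by
      rw [Matrix.mul_assoc (ρR⁻¹ * β), hswap]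
      simp only [Matrix.mul_assoc]
    rw [h1, Matrix.trace_mul_cycle, hAinv]
  -- derivative and analyticity of the determinant function
  set Mf : ℂ → Matrix (Fin p) (Fin p) ℂ := fun w => 1 - f w * αd with hMfdef
  have hMder : ∀ i j, HasDerivAt (fun w => Mf w i j) ((-(β * αd)) i j) 0 := by
    intro i j
    let L : Matrix (Fin p) (Fin p) ℂ →ₗ[ℂ] ℂ :=
      (Matrix.entryLinearMap ℂ ℂ i j).comp (LinearMap.mulRight ℂ αd)
    have h1 : HasDerivAt (fun w => (f w * αd) i j) ((β * αd) i j) 0 :=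
      (L.toContinuousLinearMap.hasFDerivAt (x := f 0)).comp_hasDerivAt 0 hβ
    exact h1.const_sub ((1 : Matrix (Fin p) (Fin p) ℂ) i j)
  have hMan : ∀ i j, AnalyticAt ℂ (fun w => Mf w i j) 0 := by
    intro i j
    let L : Matrix (Fin p) (Fin p) ℂ →ₗ[ℂ] ℂ :=
      (Matrix.entryLinearMap ℂ ℂ i j).comp (LinearMap.mulRight ℂ αd)
    have h1 : AnalyticAt ℂ (fun w => (f w * αd) i j) 0 :=
      (L.toContinuousLinearMap.analyticAt (f 0)).comp hfa
    exact analyticAt_const.sub h1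
  have hdet_deriv : HasDerivAt (fun w => (Mf w).det) ((Mf 0).adjugate * (-(β * αd))).trace 0 :=
    SchurAux2.hasDerivAt_det hMder
  have hM0 : Mf 0 = A := rfl
  have hadj : A.adjugate = A.det • A⁻¹ := by
    rw [Matrix.inv_def, smul_smul, show (Ring.inverse : ℂ → ℂ) = Inv.inv from Ring.inverse_eq_inv',
      mul_inv_cancel₀ hdetA, one_smul]
  have hDval : ((Mf 0).adjugate * (-(β * αd))).trace = -(A.det * (A⁻¹ * (β * αd)).trace) := by
    rw [hM0, hadj, Matrix.smul_mul, Matrix.trace_smul, Matrix.mul_neg, Matrix.trace_neg,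
      smul_eq_mul, mul_neg]
  have hderiv_val : deriv (fun w => (Mf w).det) 0 = -(A.det * (A⁻¹ * (β * αd)).trace) := by
    rw [hdet_deriv.deriv, hDval]
  have hdeta : AnalyticAt ℂ (fun w => (Mf w).det) 0 := SchurAux2.analyticAt_det hMan
  obtain ⟨ph, hph⟩ := hdeta
  have hbig := hph.isBigO_sub_partialSum_pow 2
  simp only [zero_add] at hbig
  have hps : ∀ y : ℂ, ph.partialSum 2 y = (Mf 0).det + y • deriv (fun w => (Mf w).det) 0 := by
    intro y
    rw [FormalMultilinearSeries.partialSum, Finset.sum_range_succ, Finset.sum_range_one,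
      FormalMultilinearSeries.apply_eq_pow_smul_coeff,
      FormalMultilinearSeries.apply_eq_pow_smul_coeff, hph.deriv]
    have hc0 : ph.coeff 0 = (Mf 0).det := hph.coeff_zero _
    rw [hc0, pow_zero, one_smul, pow_one]
    rfl
  have hρR2det : (ρR ^ 2).det = A.det := by rw [hR.sq_sqrt]
  have hfun : (fun z : ℂ => ((1 : Matrix (Fin p) (Fin p) ℂ) - f z * (f 0)ᴴ).det
        - (ρR ^ 2).det * (1 - z * (f₁ 0 * (f 0)ᴴ).trace))
      = fun y : ℂ => (Mf y).det - ph.partialSum 2 y := by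
    funext y
    rw [hps y, hρR2det, hM0]
    rw [show ((f 0)ᴴ : Matrix (Fin p) (Fin p) ℂ) = αd from rfl, htrace, hderiv_val]
    show (Mf y).det - A.det * (1 - y * (A⁻¹ * (β * αd)).trace)
      = (Mf y).det - (A.det + y • -(A.det * (A⁻¹ * (β * αd)).trace))
    rw [smul_eq_mul]
    ring
  rw [hfun]
  refine hbig.trans ?_
  refine Asymptotics.isBigO_of_le _ (fun y => ?_)
  simp [norm_pow]
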